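/- A group acting properly discontinuously and cocompactly by homeomorphisms on the real line ℝ is virtually infinite cyclic (two-ended). -/

import Mathlib

open Set

section Aux

variable {G : Type*} [Group G] [MulAction G ℝ]

/-- auxiliary: composing with an orientation-reversing element. -/
lemma aux_anti_mul_anti {r g : G} (hr : StrictAnti (fun x : ℝ => r • x))
    (hg : StrictAnti (fun x : ℝ => g • x)) :
    StrictMono (fun x : ℝ => (r * g) • x) := by
  intro x y hxy
  have h1 : g • y < g • x := hg hxy
  have h2 : r • (g • x) < r • (g • y) := hr h1
  simpa [mul_smul] using h2

end Aux

/-- a group acting properly discontinuously and cocompactly by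
homeomorphisms on the real line is virtually infinite cyclic (two-ended): it contains
`ℤ` as a finite-index subgroup. -/
theorem properly_discontinuous_cocompact_on_real_line_virtually_Z
    {G : Type*} [Group G] [MulAction G ℝ]
    (hcont : ∀ g : G, Continuous fun x : ℝ => g • x)
    (hpd : ∀ K : Set ℝ, IsCompact K →
      {g : G | ((fun x => g • x) '' K ∩ K).Nonempty}.Finite)
    (hcc : ∃ K : Set ℝ, IsCompact K ∧ ⋃ g : G, (fun x => g • x) '' K = Set.univ) :
    ∃ H : Subgroup G, H.FiniteIndex ∧ Nonempty (↥H ≃* Multiplicative ℤ) := by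
  classical
  -- every element acts strictly monotonically or antitonically
  have hma : ∀ g : G, StrictMono (fun x : ℝ => g • x) ∨ StrictAnti (fun x : ℝ => g • x) :=
    fun g => (hcont g).strictMono_of_inj (MulAction.injective g)
  -- the orientation preserving subgroup
  let Gp : Subgroup G :=
    { carrier := {g : G | StrictMono (fun x : ℝ => g • x)}
      one_mem' := by
        have : (fun x : ℝ => (1 : G) • x) = id := by funext x; simp
        show StrictMono (fun x : ℝ => (1 : G) • x); rw [this]; exact strictMono_id
      mul_mem' := by
        intro a b ha hb
        simp only [Set.mem_setOf_eq] at *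
        have := ha.comp hb
        simpa [mul_smul, Function.comp_def] using this
      inv_mem' := by
        intro a ha
        simp only [Set.mem_setOf_eq] at *
        intro x y hxy
        rcases lt_trichotomy (a⁻¹ • x) (a⁻¹ • y) with h | h | h
        · exact h
        · exfalso; rw [← smul_inv_smul a x, ← smul_inv_smul a y, h] at hxy
          exact lt_irrefl _ hxy
        · exfalso
          have := ha h
          simp only [smul_inv_smul] at this
          exact lt_irrefl _ (this.trans hxy) }
  have hGp_mem : ∀ g : G, g ∈ Gp ↔ StrictMono (fun x : ℝ => g • x) := fun g => Iff.rfl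
  -- the stabilizer of 0 is finite
  have hstab : {g : G | g • (0 : ℝ) = 0}.Finite := by
    refine (hpd {0} isCompact_singleton).subset ?_
    intro g hg
    exact ⟨0, ⟨0, rfl, hg⟩, rfl⟩
  -- the orbit of 0 meets every compact set in a finite set
  have hoK : ∀ K : Set ℝ, IsCompact K →
      {x : ℝ | (∃ g : G, g • (0 : ℝ) = x) ∧ x ∈ K}.Finite := by
    intro K hK
    have hK' : IsCompact (insert (0 : ℝ) K) := hK.insert 0
    refine ((hpd _ hK').image (fun g => g • (0 : ℝ))).subset ?_
    rintro x ⟨⟨g, rfl⟩, hxK⟩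
    exact ⟨g, ⟨g • 0, ⟨0, Set.mem_insert 0 K, rfl⟩, Set.mem_insert_iff.2 (Or.inr hxK)⟩, rfl⟩
  -- G is not finite
  have hGinf : ¬ (Set.univ : Set G).Finite := by
    intro hfin
    obtain ⟨K, hK, hU⟩ := hcc
    have : IsCompact (⋃ g : G, (fun x : ℝ => g • x) '' K) := by
      have : Finite G := Set.finite_univ_iff.mp hfin
      exact isCompact_iUnion fun g => hK.image (hcont g)
    rw [hU] at this
    exact noncompact_univ ℝ this
  -- there is an orientation preserving element moving 0 to the right
  have hx : ∃ g : G, g ∈ Gp ∧ 0 < g • (0 : ℝ) := by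
    have hne : ∃ g : G, g ∈ Gp ∧ g • (0 : ℝ) ≠ 0 := by
      by_contra hc
      push_neg at hc
      have hGpfin : (Gp : Set G).Finite :=
        hstab.subset fun g hg => hc g hg
      by_cases hall : ∀ g : G, g ∈ Gp
      · exact hGinf (hGpfin.subset fun g _ => hall g)
      · push_neg at hall
        obtain ⟨r, hr⟩ := hall
        have hranti : StrictAnti (fun x : ℝ => r • x) := (hma r).resolve_left hr
        have : (Set.univ : Set G) ⊆ (Gp : Set G) ∪ (fun g => r⁻¹ * g) '' (Gp : Set G) := by
          intro g _
          by_cases hg : g ∈ Gp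
          · exact Or.inl hg
          · have hganti : StrictAnti (fun x : ℝ => g • x) := (hma g).resolve_left hg
            refine Or.inr ⟨r * g, aux_anti_mul_anti hranti hganti, by group⟩
        exact hGinf ((hGpfin.union (hGpfin.image _)).subset this)
    obtain ⟨g, hg, hg0⟩ := hne
    rcases hg0.lt_or_gt with h | h
    · refine ⟨g⁻¹, Gp.inv_mem hg, ?_⟩
      have hmono : StrictMono (fun x : ℝ => g • x) := hg
      have h2 : g • (0:ℝ) < g • (g⁻¹ • (0:ℝ)) := by rw [smul_inv_smul]; exact h
      exact hmono.lt_iff_lt.mp h2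
    · exact ⟨g, hg, h⟩
  -- the minimal positive orbit point of the orientation preserving subgroup
  obtain ⟨g₀, hg₀Gp, hg₀pos⟩ := hx
  set P : Set ℝ := {x : ℝ | (∃ g : G, g ∈ Gp ∧ g • (0 : ℝ) = x) ∧ 0 < x} with hP
  have hx₀P : (g₀ • (0:ℝ)) ∈ P := ⟨⟨g₀, hg₀Gp, rfl⟩, hg₀pos⟩
  have hPmin : ∃ a ∈ P, ∀ y ∈ P, a ≤ y := by
    set x₀ := g₀ • (0:ℝ)
    have hfin : (P ∩ Icc 0 x₀).Finite := by
      refine (hoK (Icc 0 x₀) isCompact_Icc).subset ?_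
      rintro x ⟨⟨⟨g, _, rfl⟩, _⟩, hxI⟩
      exact ⟨⟨g, rfl⟩, hxI⟩
    have hne : (P ∩ Icc 0 x₀).Nonempty := ⟨x₀, hx₀P, le_of_lt hg₀pos, le_refl _⟩
    obtain ⟨a, ⟨haP, haI⟩, hmin⟩ := Set.exists_min_image _ id hfin hne
    refine ⟨a, haP, fun y hy => ?_⟩
    by_cases hyx : y ≤ x₀
    · exact hmin y ⟨hy, le_of_lt hy.2, hyx⟩
    · push_neg at hyx
      exact le_trans haI.2 (le_of_lt hyx)
  obtain ⟨a, ⟨⟨g₁, hg₁Gp, hg₁a⟩, ha0⟩, hamin⟩ := hPmin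
  -- the orbit of 0 under powers of g₁
  set u : ℤ → ℝ := fun n => g₁ ^ n • (0 : ℝ) with hu_def
  have hzmem : ∀ n : ℤ, g₁ ^ n ∈ Gp := fun n => Gp.zpow_mem hg₁Gp n
  have hustep : ∀ n : ℤ, u n < u (n + 1) := by
    intro n
    have h1 : u (n + 1) = g₁ ^ n • a := by
      rw [hu_def]
      simp only
      rw [zpow_add_one, mul_smul, hg₁a]
    have h2 : g₁ ^ n • (0:ℝ) < g₁ ^ n • a := (hzmem n) ha0
    rw [h1]; exact h2
  have hu : StrictMono u := strictMono_int_of_lt_succ hustep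
  have hu0 : u 0 = 0 := by simp [hu_def]
  -- the sequence u is unbounded above and below
  have hub : ∀ x : ℝ, ∃ n : ℤ, x < u n := by
    intro x
    by_contra hc
    push_neg at hc
    have hsub : u '' (Ici (0:ℤ)) ⊆ {y : ℝ | (∃ g : G, g • (0:ℝ) = y) ∧ y ∈ Icc 0 x} := by
      rintro y ⟨n, hn, rfl⟩
      exact ⟨⟨g₁ ^ n, rfl⟩, by rw [← hu0]; exact hu.monotone hn, hc n⟩
    have : (u '' (Ici (0:ℤ))).Infinite :=
      (Set.Ici_infinite 0).image (hu.injective.injOn)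
    exact this ((hoK (Icc 0 x) isCompact_Icc).subset hsub)
  have hlb : ∀ x : ℝ, ∃ n : ℤ, u n ≤ x := by
    intro x
    by_contra hc
    push_neg at hc
    have hsub : u '' (Iic (0:ℤ)) ⊆ {y : ℝ | (∃ g : G, g • (0:ℝ) = y) ∧ y ∈ Icc x 0} := by
      rintro y ⟨n, hn, rfl⟩
      exact ⟨⟨g₁ ^ n, rfl⟩, le_of_lt (hc n), by rw [← hu0]; exact hu.monotone hn⟩
    have : (u '' (Iic (0:ℤ))).Infinite :=
      (Set.Iic_infinite 0).image (hu.injective.injOn)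
    exact this ((hoK (Icc x 0) isCompact_Icc).subset hsub)
  -- every orbit point of the orientation preserving subgroup is some u n
  have hkey : ∀ g : G, g ∈ Gp → ∃ n : ℤ, g • (0:ℝ) = u n := by
    intro g hg
    set x := g • (0:ℝ) with hxdef
    obtain ⟨m, hm⟩ := hub x
    have hbdd : ∃ b : ℤ, ∀ z : ℤ, u z ≤ x → z ≤ b := by
      refine ⟨m, fun z hz => ?_⟩
      by_contra hzm
      push_neg at hzm
      exact absurd (hu.monotone hzm.le) (not_le.mpr ((hz.trans_lt hm).trans_le (le_refl _)))
    obtain ⟨n, hn, hnmax⟩ := Int.exists_greatest_of_bdd hbdd (hlb x)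
    have hn1 : x < u (n + 1) := by
      by_contra hc
      push_neg at hc
      have := hnmax (n+1) hc
      omega
    -- consider y = g₁^(-n) • x
    have hy0 : (0:ℝ) ≤ g₁ ^ (-n) • x := by
      have h3 : g₁ ^ (-n) • (g₁ ^ n • (0:ℝ)) ≤ g₁ ^ (-n) • x := (hzmem (-n)).monotone hn
      rwa [smul_smul, ← zpow_add, show -n + n = 0 by ring, zpow_zero, one_smul] at h3
    have hya : g₁ ^ (-n) • x < a := by
      have h3 : g₁ ^ (-n) • x < g₁ ^ (-n) • (g₁ ^ (n+1) • (0:ℝ)) := (hzmem (-n)) hn1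
      have h4 : g₁ ^ (-n) • (g₁ ^ (n+1) • (0:ℝ)) = a := by
        rw [smul_smul, ← zpow_add, show -n + (n+1) = 1 by ring, zpow_one]
        exact hg₁a
      rwa [h4] at h3
    have hyzero : g₁ ^ (-n) • x = 0 := by
      rcases hy0.eq_or_lt with h | h
      · exact h.symm
      · exfalso
        have hyP : (g₁ ^ (-n) • x) ∈ P :=
          ⟨⟨g₁ ^ (-n) * g, Gp.mul_mem (hzmem (-n)) hg, by rw [mul_smul, ← hxdef]⟩, h⟩
        exact absurd (hamin _ hyP) (not_le.mpr hya)
    refine ⟨n, ?_⟩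
    have := congrArg (fun y => g₁ ^ n • y) hyzero
    simp only [smul_smul, ← zpow_add] at this
    simpa [hxdef, hu_def] using this
  -- the subgroup generated by g₁
  set φ : Multiplicative ℤ →* G := zpowersHom G g₁ with hφdef
  have hφ_apply : ∀ n : ℤ, φ (Multiplicative.ofAdd n) = g₁ ^ n := fun n => rfl
  set H : Subgroup G := φ.range with hHdef
  have hmemH : ∀ n : ℤ, g₁ ^ n ∈ H := fun n => ⟨Multiplicative.ofAdd n, rfl⟩
  -- φ is injective
  have hφinj : Function.Injective φ := by
    refine (injective_iff_map_eq_one φ).mpr ?_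
    intro m hm
    have : u m.toAdd = u 0 := by
      rw [hu0, hu_def]
      have : g₁ ^ m.toAdd = 1 := hm
      simp [this]
    have := hu.injective this
    exact Multiplicative.toAdd.injective (by simpa using this)
  -- H is isomorphic to Multiplicative ℤ
  have hequiv : Nonempty (↥H ≃* Multiplicative ℤ) := by
    have hinj : Function.Injective φ.rangeRestrict := by
      intro a b hab
      apply hφinj
      exact congrArg Subtype.val hab
    exact ⟨(MulEquiv.ofBijective φ.rangeRestrict ⟨hinj, φ.rangeRestrict_surjective⟩).symm⟩
  -- finite index
  have hdec : ∀ g : G, g ∈ Gp → ∃ s : G, s • (0:ℝ) = 0 ∧ (QuotientGroup.mk g : G ⧸ H) = QuotientGroup.mk s⁻¹ := by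
    intro g hg
    obtain ⟨n, hn⟩ := hkey g⁻¹ (Gp.inv_mem hg)
    refine ⟨g₁ ^ (-n) * g⁻¹, ?_, ?_⟩
    · rw [mul_smul, hn, hu_def, smul_smul, ← zpow_add]
      simp
    · have h1 : (QuotientGroup.mk ((g₁ ^ (-n) * g⁻¹)⁻¹ * g₁ ^ (-n)) : G ⧸ H)
          = QuotientGroup.mk ((g₁ ^ (-n) * g⁻¹)⁻¹) :=
        QuotientGroup.mk_mul_of_mem _ (hmemH (-n))
      have h2 : (g₁ ^ (-n) * g⁻¹)⁻¹ * g₁ ^ (-n) = g := by group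
      rw [h2] at h1
      exact h1
  have hfinquot : (Set.univ : Set (G ⧸ H)).Finite := by
    by_cases hall : ∀ g : G, g ∈ Gp
    · have hsub : (Set.univ : Set (G ⧸ H)) ⊆
          (fun s : G => (QuotientGroup.mk s⁻¹ : G ⧸ H)) '' {g : G | g • (0:ℝ) = 0} := by
        intro q _
        obtain ⟨g, rfl⟩ := QuotientGroup.mk_surjective q
        obtain ⟨s, hs0, hsq⟩ := hdec g (hall g)
        exact ⟨s, hs0, hsq.symm⟩
      exact (hstab.image _).subset hsub
    · push_neg at hall
      obtain ⟨r, hr⟩ := hall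
      have hranti : StrictAnti (fun x : ℝ => r • x) := (hma r).resolve_left hr
      have hsub : (Set.univ : Set (G ⧸ H)) ⊆
          ((fun s : G => (QuotientGroup.mk s⁻¹ : G ⧸ H)) '' {g : G | g • (0:ℝ) = 0}) ∪
          ((fun s : G => (QuotientGroup.mk (r⁻¹ * s⁻¹) : G ⧸ H)) '' {g : G | g • (0:ℝ) = 0}) := by
        intro q _
        obtain ⟨g, rfl⟩ := QuotientGroup.mk_surjective q
        by_cases hg : g ∈ Gp
        · obtain ⟨s, hs0, hsq⟩ := hdec g hg
          exact Or.inl ⟨s, hs0, hsq.symm⟩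
        · have hganti : StrictAnti (fun x : ℝ => g • x) := (hma g).resolve_left hg
          have hrg : r * g ∈ Gp := aux_anti_mul_anti hranti hganti
          obtain ⟨s, hs0, hsq⟩ := hdec (r * g) hrg
          refine Or.inr ⟨s, hs0, ?_⟩
          have hmem : (r * g)⁻¹ * s⁻¹ ∈ H := QuotientGroup.eq.mp hsq
          have hmem' : (r⁻¹ * s⁻¹)⁻¹ * g ∈ H := by
            have h2 := H.inv_mem hmem
            rwa [show ((r * g)⁻¹ * s⁻¹)⁻¹ = (r⁻¹ * s⁻¹)⁻¹ * g by group] at h2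
          exact QuotientGroup.eq.mpr hmem'
      exact ((hstab.image _).union (hstab.image _)).subset hsub
  have : Finite (G ⧸ H) := Set.finite_univ_iff.mp hfinquot
  exact ⟨H, Subgroup.finiteIndex_of_finite_quotient (H := H), hequiv⟩
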